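/- In the CK graph CK(r, g) with g ≥ 2, if w_B < 2·w_A, then V_A is the unique maximum-weight independent set; its weight 2g·w_A is strictly greater than the weight of every other independent set. -/

import Mathlib

open Finset

/-- Vertex type of the CK graph `CK(r,g)`: `V_A` = `g` groups of 2 vertices (left),
`V_B` = `g` cliques of `r` vertices (right). -/
abbrev CKV (r g : ℕ) := (Fin g × Fin 2) ⊕ (Fin g × Fin r)

/-- The CK graph `CK(r,g)`: no edges inside `V_A`; each `r`-clique of `V_B` is complete;
a vertex of group `k` of `V_A` is adjacent to every vertex of every clique of `V_B`
except clique `k`; no edges between distinct cliques of `V_B`. -/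
def CKGraph (r g : ℕ) : SimpleGraph (CKV r g) where
  Adj u v :=
    match u, v with
    | Sum.inl _, Sum.inl _ => False
    | Sum.inl a, Sum.inr b => a.1 ≠ b.1
    | Sum.inr a, Sum.inl b => b.1 ≠ a.1
    | Sum.inr a, Sum.inr b => a.1 = b.1 ∧ a.2 ≠ b.2
  symm := by
    refine ⟨?_⟩
    rintro (⟨k, a⟩ | ⟨k, a⟩) (⟨l, b⟩ | ⟨l, b⟩) h
    · exact h
    · exact h
    · exact h
    · exact ⟨h.1.symm, h.2.symm⟩
  loopless := by
    refine ⟨?_⟩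
    rintro (⟨k, a⟩ | ⟨k, a⟩) h
    · exact h
    · exact h.2 rfl

/-- `S` is an independent set of `CK(r,g)`. -/
def CKIndep {r g : ℕ} (S : Finset (CKV r g)) : Prop :=
  ∀ u ∈ S, ∀ v ∈ S, ¬ (CKGraph r g).Adj u v

/-- `S` is a maximal independent set of `CK(r,g)`. -/
def CKMaxIndep {r g : ℕ} (S : Finset (CKV r g)) : Prop :=
  CKIndep S ∧ ∀ v : CKV r g, CKIndep (insert v S) → v ∈ S

/-- The total weight of `S`, where `V_A`-vertices weigh `wA` and `V_B`-vertices weigh `wB`. -/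
def CKwt {r g : ℕ} (wA wB : ℝ) (S : Finset (CKV r g)) : ℝ :=
  ∑ v ∈ S, Sum.elim (fun _ => wA) (fun _ => wB) v

/-- The set `V_A` of the CK graph, as a `Finset`. -/
def VA (r g : ℕ) : Finset (CKV r g) :=
  (Finset.univ : Finset (Fin g × Fin 2)).image Sum.inl

/-- For `f : Fin g → Fin r`, the selection `S_f` consisting of the `f k`-th vertex of
clique `k` of `V_B`, for each `k`. -/
def Sf {r g : ℕ} (f : Fin g → Fin r) : Finset (CKV r g) :=
  (Finset.univ : Finset (Fin g)).image (fun k => Sum.inr (k, f k))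

theorem stmt10 (r g : ℕ) (hr : 1 ≤ r) (hg : 2 ≤ g)
    (wA wB : ℝ) (hwA : 0 < wA) (hwB : 0 < wB) (h : wB < 2 * wA) :
    CKIndep (VA r g) ∧ CKwt wA wB (VA r g) = 2 * g * wA ∧
      ∀ S : Finset (CKV r g), CKIndep S → S ≠ VA r g →
        CKwt wA wB S < 2 * g * wA := by
  have hVAindep : CKIndep (VA r g) := by
    intro u hu v hv
    simp only [VA, Finset.mem_image, Finset.mem_univ, true_and] at hu hv
    obtain ⟨a, rfl⟩ := hu
    obtain ⟨b, rfl⟩ := hv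
    intro hadj
    exact hadj
  have hVAcard : (VA r g).card = 2 * g := by
    rw [VA, Finset.card_image_of_injective _ Sum.inl_injective]
    simp [mul_comm]
  have hwt : ∀ S : Finset (CKV r g),
      CKwt wA wB S = (S.filter (fun v => v.isLeft)).card * wA
        + (S.filter (fun v => ¬ v.isLeft)).card * wB := by
    intro S
    rw [CKwt, ← Finset.sum_filter_add_sum_filter_not S (fun v => v.isLeft)]
    congr 1
    · rw [Finset.sum_congr rfl (fun v hv => ?_), Finset.sum_const, nsmul_eq_mul]
      simp only [Finset.mem_filter] at hv
      obtain ⟨a, rfl⟩ := Sum.isLeft_iff.mp hv.2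
      rfl
    · rw [Finset.sum_congr rfl (fun v hv => ?_), Finset.sum_const, nsmul_eq_mul]
      simp only [Finset.mem_filter] at hv
      obtain ⟨a, rfl⟩ := Sum.isRight_iff.mp (Sum.not_isLeft.mp hv.2)
      rfl
  have hVAwt : CKwt wA wB (VA r g) = 2 * g * wA := by
    rw [hwt]
    have h1 : (VA r g).filter (fun v => v.isLeft) = VA r g := by
      apply Finset.filter_eq_self.mpr
      intro v hv
      simp only [VA, Finset.mem_image] at hv
      obtain ⟨a, _, rfl⟩ := hv
      rfl
    have h2 : (VA r g).filter (fun v => ¬ v.isLeft) = ∅ := by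
      apply Finset.filter_eq_empty_iff.mpr
      intro v hv
      simp only [VA, Finset.mem_image] at hv
      obtain ⟨a, _, rfl⟩ := hv
      simp
    rw [h1, h2, hVAcard]
    push_cast [Finset.card_empty]
    ring
  refine ⟨hVAindep, hVAwt, ?_⟩
  intro S hS hne
  set SA := S.filter (fun v => v.isLeft) with hSAdef
  set SB := S.filter (fun v => ¬ v.isLeft) with hSBdef
  have hsum : CKwt wA wB S = SA.card * wA + SB.card * wB := hwt S
  have hSBinr : ∀ v ∈ SB, ∃ k b, v = Sum.inr (k, b) := by
    intro v hv
    simp only [hSBdef, Finset.mem_filter] at hv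
    obtain ⟨a, rfl⟩ := Sum.isRight_iff.mp (Sum.not_isLeft.mp hv.2)
    exact ⟨a.1, a.2, rfl⟩
  by_cases hB : SB = ∅
  · -- Case 1: S ⊆ VA
    have hSAeq : SA = S := by
      apply Finset.filter_eq_self.mpr
      intro v hv
      by_contra hnl
      have : v ∈ SB := Finset.mem_filter.mpr ⟨hv, hnl⟩
      simp [hB] at this
    have hsub : S ⊆ VA r g := by
      intro v hv
      have hv' : v ∈ SA := hSAeq ▸ hv
      simp only [hSAdef, Finset.mem_filter] at hv'
      obtain ⟨a, rfl⟩ := Sum.isLeft_iff.mp hv'.2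
      simp [VA]
    have hlt : S.card < 2 * g := by
      rw [← hVAcard]
      exact Finset.card_lt_card (ssubset_of_subset_of_ne hsub hne)
    rw [hsum, hB, hSAeq]
    simp only [Finset.card_empty, Nat.cast_zero, zero_mul, add_zero]
    calc (S.card : ℝ) * wA < (2 * g : ℕ) * wA := by
          exact mul_lt_mul_of_pos_right (by exact_mod_cast hlt) hwA
      _ = 2 * g * wA := by push_cast; ring
  · obtain ⟨v0, hv0⟩ := Finset.nonempty_iff_ne_empty.mpr hB
    obtain ⟨k, b, rfl⟩ := hSBinr v0 hv0
    have hkbS : Sum.inr (k, b) ∈ S := (Finset.mem_filter.mp hv0).1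
    by_cases h2 : ∀ v ∈ SB, ∀ k' b', v = Sum.inr (k', b') → k' = k
    · -- Case 2b: all B-vertices in clique k
      have hSBsub : SB ⊆ {Sum.inr (k, b)} := by
        intro v hv
        obtain ⟨k', b', rfl⟩ := hSBinr v hv
        have hk' : k' = k := h2 _ hv k' b' rfl
        subst hk'
        have hvS : Sum.inr (k', b') ∈ S := (Finset.mem_filter.mp hv).1
        have hb' : b' = b := by
          by_contra hbb
          exact hS _ hvS _ hkbS ⟨rfl, hbb⟩
        simp [hb']
      have hSBcard : SB.card ≤ 1 := by
        calc SB.card ≤ ({Sum.inr (k, b)} : Finset (CKV r g)).card :=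
              Finset.card_le_card hSBsub
          _ = 1 := Finset.card_singleton _
      have hSAcard : SA.card ≤ 2 := by
        have : SA.card ≤ (Finset.univ : Finset (Fin 2)).card := by
          apply Finset.card_le_card_of_injOn
            (fun v => match v with | Sum.inl a => a.2 | Sum.inr _ => 0)
            (fun _ _ => Finset.mem_univ _)
          intro u hu v hv huv
          simp only [hSAdef, Finset.mem_coe, Finset.mem_filter] at hu hv
          obtain ⟨a, rfl⟩ := Sum.isLeft_iff.mp hu.2
          obtain ⟨c, rfl⟩ := Sum.isLeft_iff.mp hv.2
          have ha1 : a.1 = k := by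
            by_contra hak
            exact hS _ hu.1 _ hkbS hak
          have hc1 : c.1 = k := by
            by_contra hck
            exact hS _ hv.1 _ hkbS hck
          simp only at huv
          rw [Sum.inl.injEq, Prod.ext_iff]
          exact ⟨ha1.trans hc1.symm, huv⟩
        simpa using this
      rw [hsum]
      have h1 : (SA.card : ℝ) * wA ≤ 2 * wA :=
        mul_le_mul_of_nonneg_right (by exact_mod_cast hSAcard) hwA.le
      have h2' : (SB.card : ℝ) * wB ≤ 1 * wB :=
        mul_le_mul_of_nonneg_right (by exact_mod_cast hSBcard) hwB.le
      have hg2 : (2 : ℝ) ≤ (g : ℝ) := by exact_mod_cast hg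
      nlinarith [mul_pos hwA hwB]
    · -- Case 2a: B-vertices from at least two cliques → SA = ∅, SB.card ≤ g
      push_neg at h2
      obtain ⟨v1, hv1, k', b', rfl, hk'⟩ := h2
      have hk'S : Sum.inr (k', b') ∈ S := (Finset.mem_filter.mp hv1).1
      have hSAempty : SA = ∅ := by
        apply Finset.filter_eq_empty_iff.mpr
        intro v hv hl
        obtain ⟨a, rfl⟩ := Sum.isLeft_iff.mp hl
        by_cases hak : a.1 = k
        · exact hS _ hv _ hk'S (show a.1 ≠ k' from fun e => hk' (e.symm.trans hak))
        · exact hS _ hv _ hkbS hak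
      have hSBcard : SB.card ≤ g := by
        have : SB.card ≤ (Finset.univ : Finset (Fin g)).card := by
          apply Finset.card_le_card_of_injOn
            (fun v => match v with | Sum.inl a => a.1 | Sum.inr a => a.1)
            (fun _ _ => Finset.mem_univ _)
          intro u hu v hv huv
          obtain ⟨ku, bu, rfl⟩ := hSBinr u (Finset.mem_coe.mp hu)
          obtain ⟨kv, bv, rfl⟩ := hSBinr v (Finset.mem_coe.mp hv)
          simp only at huv
          have huS : Sum.inr (ku, bu) ∈ S := (Finset.mem_filter.mp (Finset.mem_coe.mp hu)).1
          have hvS : Sum.inr (kv, bv) ∈ S := (Finset.mem_filter.mp (Finset.mem_coe.mp hv)).1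
          have hbb : bu = bv := by
            by_contra hbb
            exact hS _ huS _ hvS ⟨huv, hbb⟩
          rw [Sum.inr.injEq, Prod.ext_iff]
          exact ⟨huv, hbb⟩
        simpa using this
      rw [hsum, hSAempty]
      simp only [Finset.card_empty, Nat.cast_zero, zero_mul, zero_add]
      calc (SB.card : ℝ) * wB ≤ (g : ℝ) * wB :=
            mul_le_mul_of_nonneg_right (by exact_mod_cast hSBcard) hwB.le
        _ < (g : ℝ) * (2 * wA) := by
            apply mul_lt_mul_of_pos_left h
            exact_mod_cast lt_of_lt_of_le (by norm_num) hg
        _ = 2 * g * wA := by ring
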